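/- Gusfield's sheltering lemma (subtraction form): Let X be a minimum x-y-cut side with x ∈ X, y ∉ X, and let H be a minimum u-v-cut side with u, v ∉ X and x ∉ H. Then H \ X is also a minimum u-v-cut side: cost(H \ X) ≤ cost(H) and H \ X separates u and v. -/

import Mathlib

open Finset

variable {V : Type*}

/-- Cost of the cut given by side `S`: sum of costs of ordered pairs crossing the cut. -/
def cutCost [Fintype V] [DecidableEq V] (c : V → V → NNReal) (S : Finset V) : NNReal :=
  ∑ x ∈ S, ∑ y ∈ Sᶜ, c x y

/-- Minimum `u`-`v`-cut value. -/
noncomputable def minCut [Fintype V] [DecidableEq V] (c : V → V → NNReal) (u v : V) : NNReal :=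
  sInf {w : NNReal | ∃ S : Finset V, u ∈ S ∧ v ∉ S ∧ cutCost c S = w}

lemma cutCost_eq_ite [Fintype V] [DecidableEq V] (c : V → V → NNReal) (S : Finset V) :
    cutCost c S = ∑ a ∈ univ, ∑ b ∈ univ, if a ∈ S ∧ b ∉ S then c a b else 0 := by
  classical
  have hinner : ∀ a : V, (∑ b ∈ univ, if a ∈ S ∧ b ∉ S then c a b else 0)
      = if a ∈ S then ∑ b ∈ Sᶜ, c a b else 0 := by
    intro a
    by_cases ha : a ∈ S
    · simp only [ha, true_and, if_true]
      rw [← Finset.sum_filter]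
      congr 1
      ext b
      simp
    · simp [ha]
  rw [cutCost]
  simp_rw [hinner]
  rw [Finset.sum_ite_mem, Finset.univ_inter]

lemma cutCost_double [Fintype V] [DecidableEq V] (c : V → V → NNReal)
    (hsymm : ∀ x y, c x y = c y x) (S : Finset V) :
    cutCost c S + cutCost c S =
      ∑ a ∈ univ, ∑ b ∈ univ,
        ((if a ∈ S ∧ b ∉ S then c a b else 0) + (if b ∈ S ∧ a ∉ S then c a b else 0)) := by
  have h2 : (∑ a ∈ univ, ∑ b ∈ univ, if a ∈ S ∧ b ∉ S then c a b else 0)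
      = ∑ a ∈ univ, ∑ b ∈ univ, if b ∈ S ∧ a ∉ S then c a b else 0 := by
    rw [Finset.sum_comm]
    refine Finset.sum_congr rfl fun a _ => Finset.sum_congr rfl fun b _ => ?_
    rw [hsymm]
  rw [cutCost_eq_ite]
  nth_rewrite 2 [h2]
  rw [← Finset.sum_add_distrib]
  exact Finset.sum_congr rfl fun a _ => (Finset.sum_add_distrib).symm

lemma cut_posimodular [Fintype V] [DecidableEq V] (c : V → V → NNReal)
    (hsymm : ∀ x y, c x y = c y x) (X H : Finset V) :
    cutCost c (X \ H) + cutCost c (H \ X) ≤ cutCost c X + cutCost c H := by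
  have key : (cutCost c (X \ H) + cutCost c (H \ X)) + (cutCost c (X \ H) + cutCost c (H \ X))
      ≤ (cutCost c X + cutCost c H) + (cutCost c X + cutCost c H) := by
    have e1 := cutCost_double c hsymm (X \ H)
    have e2 := cutCost_double c hsymm (H \ X)
    have e3 := cutCost_double c hsymm X
    have e4 := cutCost_double c hsymm H
    calc (cutCost c (X \ H) + cutCost c (H \ X)) + (cutCost c (X \ H) + cutCost c (H \ X))
        = (cutCost c (X \ H) + cutCost c (X \ H)) + (cutCost c (H \ X) + cutCost c (H \ X)) := by
          ring
      _ ≤ (cutCost c X + cutCost c X) + (cutCost c H + cutCost c H) := by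
          rw [e1, e2, e3, e4, ← Finset.sum_add_distrib, ← Finset.sum_add_distrib]
          refine Finset.sum_le_sum fun a _ => ?_
          rw [← Finset.sum_add_distrib, ← Finset.sum_add_distrib]
          refine Finset.sum_le_sum fun b _ => ?_
          simp only [Finset.mem_sdiff]
          by_cases haX : a ∈ X <;> by_cases haH : a ∈ H <;>
            by_cases hbX : b ∈ X <;> by_cases hbH : b ∈ H <;>
            simp [haX, haH, hbX, hbH]
      _ = (cutCost c X + cutCost c H) + (cutCost c X + cutCost c H) := by ring
  rw [← two_mul, ← two_mul] at key
  exact le_of_mul_le_mul_left key (by norm_num)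

theorem gusfield_shelter_diff [Fintype V] [DecidableEq V] (c : V → V → NNReal)
    (hsymm : ∀ x y, c x y = c y x) (x y u v : V) (X H : Finset V)
    (hxX : x ∈ X) (hyX : y ∉ X) (hXmin : cutCost c X = minCut c x y)
    (huX : u ∉ X) (hvX : v ∉ X)
    (huH : u ∈ H) (hvH : v ∉ H) (hxH : x ∉ H) (hHmin : cutCost c H = minCut c u v) :
    cutCost c (H \ X) ≤ cutCost c H ∧ u ∈ H \ X ∧ v ∉ H \ X := by
  have hXle : cutCost c X ≤ cutCost c (X \ H) := by
    rw [hXmin]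
    apply csInf_le (OrderBot.bddBelow _)
    exact ⟨X \ H, by simp [hxX, hxH], by simp [hyX], rfl⟩
  have key := cut_posimodular c hsymm X H
  have h1 : cutCost c X + cutCost c (H \ X) ≤ cutCost c X + cutCost c H :=
    le_trans (add_le_add_left hXle _) key
  exact ⟨le_of_add_le_add_left h1, by simp [huH, huX], by simp [hvH]⟩
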